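/- Let (A,B) be a nonempty, weakly compact, convex pair of subsets of a normed linear space X, and T : (A×B) ∪ (B×A) → A ∪ B a p-cyclic Kannan nonexpansive mapping. Suppose that ‖(T(x,y), T(y,x)) − (T(T(x,y), T(y,x)), T(T(y,x), T(x,y)))‖ < ‖(x,y) − (T(x,y), T(y,x))‖ whenever dist(A,B) < ‖(x,y) − (T(x,y), T(y,x))‖. Then T has a coupled best proximity point. -/
import Mathlib


open Filter Topology

/-- `setDist A B = inf {‖a - b‖ : a ∈ A, b ∈ B}`. -/
noncomputable def setDist {X : Type*} [NormedAddCommGroup X] (A B : Set X) : ℝ :=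
  sInf {d : ℝ | ∃ a ∈ A, ∃ b ∈ B, d = ‖a - b‖}

theorem stmt13 {X : Type*} [NormedAddCommGroup X] [NormedSpace ℝ X]
    (A B : Set X) (hA : A.Nonempty) (hB : B.Nonempty)
    (hAconv : Convex ℝ A) (hBconv : Convex ℝ B)
    (hAwc : IsCompact (toWeakSpace ℝ X '' A)) (hBwc : IsCompact (toWeakSpace ℝ X '' B))
    (T : X → X → X)
    (hTB : ∀ x ∈ A, ∀ y ∈ B, T x y ∈ B)
    (hTA : ∀ x ∈ B, ∀ y ∈ A, T x y ∈ A)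
    (hT : ∀ x₁ ∈ A, ∀ y₁ ∈ B, ∀ x₂ ∈ B, ∀ y₂ ∈ A,
      ‖T x₁ y₁ - T x₂ y₂‖ ≤ (1 / 2) *
        (‖((x₁, y₁) : X × X) - (T x₁ y₁, T y₁ x₁)‖
          + ‖((x₂, y₂) : X × X) - (T x₂ y₂, T y₂ x₂)‖))
    (hcond : ∀ x' ∈ A, ∀ y' ∈ B,
      setDist A B < ‖((x', y') : X × X) - (T x' y', T y' x')‖ →
      ‖((T x' y', T y' x') : X × X) - (T (T x' y') (T y' x'), T (T y' x') (T x' y'))‖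
        < ‖((x', y') : X × X) - (T x' y', T y' x')‖) :
    ∃ x' ∈ A, ∃ y' ∈ B,
      ‖x' - T x' y'‖ = setDist A B ∧ ‖y' - T y' x'‖ = setDist A B := by
  classical
  set d := setDist A B with hd
  obtain ⟨a0, ha0⟩ := hA
  obtain ⟨b0, hb0⟩ := hB
  have hD_ne : {t : ℝ | ∃ a ∈ A, ∃ b ∈ B, t = ‖a - b‖}.Nonempty :=
    ⟨‖a0 - b0‖, a0, ha0, b0, hb0, rfl⟩
  have hD_bdd : BddBelow {t : ℝ | ∃ a ∈ A, ∃ b ∈ B, t = ‖a - b‖} := by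
    refine ⟨0, ?_⟩
    rintro t ⟨a, -, b, -, rfl⟩
    exact norm_nonneg _
  have hd_le : ∀ a ∈ A, ∀ b ∈ B, d ≤ ‖a - b‖ := fun a ha b hb =>
    csInf_le hD_bdd ⟨a, ha, b, hb, rfl⟩
  have hd0 : 0 ≤ d := le_csInf hD_ne (by rintro t ⟨a, -, b, -, rfl⟩; exact norm_nonneg _)
  set Φ : X → X → ℝ := fun a b => ‖((a, b) : X × X) - (T a b, T b a)‖ with hΦdef
  have hΦ_eq : ∀ a b : X, Φ a b = max ‖a - T a b‖ ‖b - T b a‖ := fun a b => rfl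
  have hΦ_symm : ∀ a b : X, Φ a b = Φ b a := fun a b => by
    rw [hΦ_eq, hΦ_eq, max_comm]
  have hdΦ : ∀ x ∈ A, ∀ y ∈ B, d ≤ Φ x y := by
    intro x hx y hy
    refine le_trans (hd_le x hx (T x y) (hTB x hx y hy)) ?_
    rw [hΦ_eq]; exact le_max_left _ _
  -- the infimum of Φ over A × B
  set Sv : Set ℝ := {t : ℝ | ∃ x ∈ A, ∃ y ∈ B, t = Φ x y} with hSvdef
  have hSv_ne : Sv.Nonempty := ⟨Φ a0 b0, a0, ha0, b0, hb0, rfl⟩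
  have hSv_bdd : BddBelow Sv := by
    refine ⟨0, ?_⟩
    rintro t ⟨x, -, y, -, rfl⟩
    exact norm_nonneg _
  set r : ℝ := sInf Sv with hrdef
  have hr_le : ∀ x ∈ A, ∀ y ∈ B, r ≤ Φ x y := fun x hx y hy =>
    csInf_le hSv_bdd ⟨x, hx, y, hy, rfl⟩
  have hd_r : d ≤ r := le_csInf hSv_ne (by rintro t ⟨x, hx, y, hy, rfl⟩; exact hdΦ x hx y hy)
  -- Kannan cross estimate
  have hK : ∀ x ∈ A, ∀ y ∈ B, ∀ p ∈ B, ∀ q ∈ A,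
      ‖((T x y, T y x) : X × X) - (T p q, T q p)‖ ≤ (1 / 2) * (Φ x y + Φ p q) := by
    intro x hx y hy p hp q hq
    rw [norm_prod_le_iff]
    constructor
    · exact hT x hx y hy p hp q hq
    · have h2 := hT q hq p hp y hy x hx
      calc ‖(((T x y, T y x) : X × X) - (T p q, T q p)).2‖ = ‖T y x - T q p‖ := rfl
        _ = ‖T q p - T y x‖ := norm_sub_rev _ _
        _ ≤ (1 / 2) * (Φ q p + Φ y x) := h2
        _ = (1 / 2) * (Φ x y + Φ p q) := by rw [hΦ_symm q p, hΦ_symm y x]; ring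
  -- minimizing sequence
  have hmin : ∀ n : ℕ, ∃ x, x ∈ A ∧ ∃ y, y ∈ B ∧ Φ x y < r + 1 / (n + 1) := by
    intro n
    have hpos : (0 : ℝ) < 1 / ((n : ℝ) + 1) := by positivity
    have : r < r + 1 / ((n : ℝ) + 1) := by linarith
    obtain ⟨t, ht, htlt⟩ := exists_lt_of_csInf_lt hSv_ne this
    obtain ⟨x, hx, y, hy, rfl⟩ := ht
    exact ⟨x, hx, y, hy, htlt⟩
  choose xs hxs ys hys hΦs using hmin
  have hpBn : ∀ n, T (xs n) (ys n) ∈ B := fun n => hTB _ (hxs n) _ (hys n)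
  have hqAn : ∀ n, T (ys n) (xs n) ∈ A := fun n => hTA _ (hys n) _ (hxs n)
  -- cluster point in the weak topology
  set W : ℕ → WeakSpace ℝ X × WeakSpace ℝ X := fun n =>
    (toWeakSpace ℝ X (T (xs n) (ys n)), toWeakSpace ℝ X (T (ys n) (xs n))) with hWdef
  have hcomp : IsCompact ((toWeakSpace ℝ X '' B) ×ˢ (toWeakSpace ℝ X '' A)) := hBwc.prod hAwc
  have hle : Filter.map W atTop ≤ 𝓟 ((toWeakSpace ℝ X '' B) ×ˢ (toWeakSpace ℝ X '' A)) := by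
    rw [le_principal_iff, Filter.mem_map]
    filter_upwards with n
    exact Set.mem_prod.2 ⟨Set.mem_image_of_mem _ (hpBn n), Set.mem_image_of_mem _ (hqAn n)⟩
  obtain ⟨PQ, hPQmem, hPQ⟩ := hcomp.exists_clusterPt hle
  obtain ⟨hPmem, hQmem⟩ := Set.mem_prod.1 hPQmem
  obtain ⟨p, hpB, hp⟩ := hPmem
  obtain ⟨q, hqA, hq⟩ := hQmem
  -- weakly closed balls
  have hball : ∀ (v : X) (c : ℝ), IsClosed (toWeakSpace ℝ X '' Metric.closedBall v c) := by
    intro v c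
    have h2 := (convex_closedBall v c).toWeakSpace_closure (𝕜 := ℝ)
    rw [Metric.isClosed_closedBall.closure_eq] at h2
    rw [h2]
    exact isClosed_closure
  -- the main estimate via weak lower semicontinuity
  have hup : ∀ ε > (0 : ℝ), Φ p q ≤ (1 / 2) * (r + Φ p q) + ε := by
    intro ε hε
    set c : ℝ := (1 / 2) * (r + Φ p q) + ε with hcdef
    have hΦpq0 : 0 ≤ Φ p q := norm_nonneg _
    obtain ⟨N, hN⟩ := exists_nat_gt (1 / (2 * ε))
    have hNle : ∀ n ≥ N, 1 / ((n : ℝ) + 1) ≤ 2 * ε := by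
      intro n hn
      have h1 : (1 : ℝ) / (2 * ε) < (n : ℝ) + 1 := by
        have : (N : ℝ) ≤ (n : ℝ) := by exact_mod_cast hn
        linarith
      have h2 : (0 : ℝ) < (n : ℝ) + 1 := by positivity
      rw [div_le_iff₀ h2]
      have h3 : (0 : ℝ) < 2 * ε := by linarith
      rw [div_lt_iff₀ h3] at h1
      nlinarith
    set C : Set (WeakSpace ℝ X × WeakSpace ℝ X) :=
      (toWeakSpace ℝ X '' Metric.closedBall (T p q) c) ×ˢ
        (toWeakSpace ℝ X '' Metric.closedBall (T q p) c) with hCdef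
    have hCclosed : IsClosed C := (hball _ _).prod (hball _ _)
    have hCev : ∀ n ≥ N, W n ∈ C := by
      intro n hn
      have hk := hK (xs n) (hxs n) (ys n) (hys n) p hpB q hqA
      have hk2 : ‖((T (xs n) (ys n), T (ys n) (xs n)) : X × X) - (T p q, T q p)‖ ≤ c := by
        have := (hΦs n).le
        have := hNle n hn
        calc ‖((T (xs n) (ys n), T (ys n) (xs n)) : X × X) - (T p q, T q p)‖
            ≤ (1 / 2) * (Φ (xs n) (ys n) + Φ p q) := hk
          _ ≤ c := by rw [hcdef]; linarith
      rw [norm_prod_le_iff] at hk2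
      refine Set.mem_prod.2 ⟨Set.mem_image_of_mem _ ?_, Set.mem_image_of_mem _ ?_⟩
      · rw [Metric.mem_closedBall, dist_eq_norm]
        exact hk2.1
      · rw [Metric.mem_closedBall, dist_eq_norm]
        exact hk2.2
    have hCf : C ∈ Filter.map W atTop := by
      rw [Filter.mem_map]
      filter_upwards [eventually_ge_atTop N] with n hn using hCev n hn
    have hclP : ClusterPt PQ (𝓟 C) := hPQ.mono (le_principal_iff.2 hCf)
    have hPQC : PQ ∈ C := by
      have := mem_closure_iff_clusterPt.2 hclP
      rwa [hCclosed.closure_eq] at this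
    obtain ⟨hPC, hQC⟩ := Set.mem_prod.1 hPQC
    obtain ⟨p', hp', hp'eq⟩ := hPC
    obtain ⟨q', hq', hq'eq⟩ := hQC
    have hpp : p' = p := (toWeakSpace ℝ X).injective (by rw [hp'eq, hp])
    have hqq : q' = q := (toWeakSpace ℝ X).injective (by rw [hq'eq, hq])
    rw [hpp] at hp'
    rw [hqq] at hq'
    rw [Metric.mem_closedBall, dist_eq_norm] at hp' hq'
    rw [hΦ_eq]
    exact max_le hp' hq'
  have hΦle : Φ p q ≤ r := by
    have h1 : Φ p q ≤ (1 / 2) * (r + Φ p q) := le_of_forall_pos_le_add hup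
    linarith
  have hΦge : r ≤ Φ p q := by
    have := hr_le q hqA p hpB
    rwa [hΦ_symm q p] at this
  have hΦr : Φ p q = r := le_antisymm hΦle hΦge
  -- r = d via the strict decrease condition
  have hrd : r = d := by
    by_contra hne
    have hlt : d < r := lt_of_le_of_ne hd_r (Ne.symm hne)
    have hqpr : Φ q p = r := by rw [hΦ_symm q p, hΦr]
    have hc := hcond q hqA p hpB (by rw [show ‖((q, p) : X × X) - (T q p, T p q)‖ = Φ q p from rfl, hqpr]; exact hlt)
    have hc' : Φ (T q p) (T p q) < r := by
      rw [show ‖((T q p, T p q) : X × X) - (T (T q p) (T p q), T (T p q) (T q p))‖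
        = Φ (T q p) (T p q) from rfl] at hc
      rw [show ‖((q, p) : X × X) - (T q p, T p q)‖ = Φ q p from rfl, hqpr] at hc
      exact hc
    have hmem : r ≤ Φ (T p q) (T q p) :=
      hr_le (T p q) (hTA p hpB q hqA) (T q p) (hTB q hqA p hpB)
    rw [hΦ_symm (T p q) (T q p)] at hmem
    linarith
  -- conclusion
  refine ⟨q, hqA, p, hpB, ?_, ?_⟩
  · refine le_antisymm ?_ (hd_le q hqA (T q p) (hTB q hqA p hpB))
    have : ‖q - T q p‖ ≤ Φ q p := by rw [hΦ_eq]; exact le_max_left _ _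
    rw [hΦ_symm q p, hΦr, hrd] at this
    exact this
  · refine le_antisymm ?_ ?_
    · have : ‖p - T p q‖ ≤ Φ p q := by rw [hΦ_eq]; exact le_max_left _ _
      rw [hΦr, hrd] at this
      exact this
    · have := hd_le (T p q) (hTA p hpB q hqA) p hpB
      rwa [norm_sub_rev] at this
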